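/- Let X be an r-uniform hypergraph and k a positive integer with Δ(X) ≥ 3k(log(2k) + (r−1)·log v(X)). Then there exists a partition V_1, …, V_k of V(X) such that |V_i| ≤ 2·v(X)/k for all i, and for every (r−1)-subset S of V(X) and every i ∈ [k], the number of vertices v ∈ V_i with S ∪ {v} ∈ E(X) is at most 2·Δ(X)/k. -/

import Mathlib

open Finset

private lemma qp_sum_weight {V : Type*} [Fintype V] [DecidableEq V] {k : ℕ}
    (A : Finset V) (i : Fin k) :
    ∑ P : V → Fin k, ∏ v : V, (if P v = i ∧ v ∈ A then (2:ℝ) else 1)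
      = ((k:ℝ)+1) ^ A.card * (k:ℝ) ^ (Fintype.card V - A.card) := by
  classical
  have h := Finset.prod_univ_sum (fun _ : V => (univ : Finset (Fin k)))
      (fun v j => if j = i ∧ v ∈ A then (2:ℝ) else 1)
  rw [Fintype.piFinset_univ] at h
  rw [← h]
  have hv : ∀ v : V, (∑ j : Fin k, if j = i ∧ v ∈ A then (2:ℝ) else 1)
      = if v ∈ A then (k:ℝ)+1 else (k:ℝ) := by
    intro v
    by_cases hA : v ∈ A
    · simp only [hA, and_true, if_pos]
      have : (fun j : Fin k => if j = i then (2:ℝ) else 1)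
          = fun j => 1 + if j = i then (1:ℝ) else 0 := by
        funext j; split <;> norm_num
      rw [this, Finset.sum_add_distrib, Finset.sum_ite_eq' univ i (fun _ => (1:ℝ))]
      simp [add_comm]
    · simp [hA]
  rw [Finset.prod_congr rfl (fun v _ => hv v), Finset.prod_ite (fun _ => (k:ℝ)+1) (fun _ => (k:ℝ)),
    Finset.prod_const, Finset.prod_const]
  congr 2
  · simp [Finset.filter_univ_mem]
  · rw [← Finset.card_compl]
    congr 1
    ext v; simp

private lemma qp_count_bad_le {V : Type*} [Fintype V] [DecidableEq V] {k : ℕ}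
    (A : Finset V) (i : Fin k) (t : ℝ) :
    ((univ.filter (fun P : V → Fin k =>
        t < ((univ.filter (fun v => P v = i ∧ v ∈ A)).card : ℝ))).card : ℝ)
      ≤ Real.exp (-t * Real.log 2) * (((k:ℝ)+1) ^ A.card * (k:ℝ) ^ (Fintype.card V - A.card)) := by
  classical
  set c : (V → Fin k) → ℕ := fun P => (univ.filter (fun v => P v = i ∧ v ∈ A)).card with hc
  have hw : ∀ P : V → Fin k, (∏ v : V, (if P v = i ∧ v ∈ A then (2:ℝ) else 1)) = 2 ^ (c P) := by
    intro P
    rw [Finset.prod_ite (fun _ => (2:ℝ)) (fun _ => (1:ℝ)), Finset.prod_const, Finset.prod_const]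
    simp [hc]
  have key : ((univ.filter (fun P : V → Fin k => t < (c P : ℝ))).card : ℝ) * Real.exp (t * Real.log 2)
      ≤ ((k:ℝ)+1) ^ A.card * (k:ℝ) ^ (Fintype.card V - A.card) := by
    rw [← qp_sum_weight A i]
    have h1 : ∀ P ∈ univ.filter (fun P : V → Fin k => t < (c P : ℝ)),
        Real.exp (t * Real.log 2) ≤ 2 ^ (c P) := by
      intro P hP
      rw [Finset.mem_filter] at hP
      have : Real.exp (t * Real.log 2) = (2:ℝ) ^ t := by
        rw [Real.rpow_def_of_pos (by norm_num), mul_comm]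
      rw [this, ← Real.rpow_natCast 2 (c P)]
      exact Real.rpow_le_rpow_of_exponent_le (by norm_num) (le_of_lt hP.2)
    calc ((univ.filter (fun P : V → Fin k => t < (c P : ℝ))).card : ℝ) * Real.exp (t * Real.log 2)
        = ∑ _P ∈ univ.filter (fun P : V → Fin k => t < (c P : ℝ)), Real.exp (t * Real.log 2) := by
          rw [Finset.sum_const, nsmul_eq_mul]
      _ ≤ ∑ P ∈ univ.filter (fun P : V → Fin k => t < (c P : ℝ)), (2:ℝ) ^ (c P) :=
          Finset.sum_le_sum h1
      _ ≤ ∑ P : V → Fin k, (2:ℝ) ^ (c P) :=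
          Finset.sum_le_sum_of_subset_of_nonneg (Finset.filter_subset _ _)
            (fun P _ _ => by positivity)
      _ = ∑ P : V → Fin k, ∏ v : V, (if P v = i ∧ v ∈ A then (2:ℝ) else 1) :=
          Finset.sum_congr rfl (fun P _ => (hw P).symm)
  have hexp : (0:ℝ) < Real.exp (t * Real.log 2) := Real.exp_pos _
  rw [neg_mul, Real.exp_neg]
  rw [← le_div_iff₀ hexp] at key
  calc ((univ.filter (fun P : V → Fin k => t < (c P : ℝ))).card : ℝ)
      ≤ (((k:ℝ)+1) ^ A.card * (k:ℝ) ^ (Fintype.card V - A.card)) / Real.exp (t * Real.log 2) := key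
    _ = _ := by rw [div_eq_mul_inv, mul_comm]

private lemma qp_weight_le {k m n : ℕ} (hk : 1 ≤ k) (hmn : m ≤ n) :
    ((k:ℝ)+1) ^ m * (k:ℝ) ^ (n-m) ≤ (k:ℝ) ^ n * Real.exp ((m:ℝ)/k) := by
  have hk0 : (0:ℝ) < k := by exact_mod_cast hk
  have h1 : (k:ℝ)+1 = k * (1 + 1/k) := by field_simp
  have h2 : (1:ℝ) + 1/k ≤ Real.exp (1/k) := by
    have := Real.add_one_le_exp (1/(k:ℝ)); linarith
  have h3 : ((k:ℝ)+1) ^ m ≤ (k:ℝ)^m * Real.exp ((m:ℝ)/k) := by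
    rw [h1, mul_pow]
    refine mul_le_mul_of_nonneg_left ?_ (by positivity)
    calc (1 + 1/(k:ℝ))^m ≤ (Real.exp (1/k))^m :=
          pow_le_pow_left₀ (by positivity) h2 m
      _ = Real.exp ((m:ℝ)/k) := by
          rw [← Real.exp_nat_mul]; ring_nf
  calc ((k:ℝ)+1) ^ m * (k:ℝ) ^ (n-m)
      ≤ ((k:ℝ)^m * Real.exp ((m:ℝ)/k)) * (k:ℝ)^(n-m) :=
        mul_le_mul_of_nonneg_right h3 (by positivity)
    _ = (k:ℝ)^(m + (n-m)) * Real.exp ((m:ℝ)/k) := by rw [pow_add]; ring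
    _ = (k:ℝ)^n * Real.exp ((m:ℝ)/k) := by rw [Nat.add_sub_cancel' hmn]

private lemma qp_event_bound {k n m : ℕ} {Θ Δ : ℝ} (hk : 1 ≤ k) (hmn : m ≤ n)
    (hmΘ : (m:ℝ) ≤ Θ) (hΘΔ : Δ ≤ Θ) (hΔ : 0 < Δ) :
    Real.exp (-(2*Θ/k) * Real.log 2) * (((k:ℝ)+1) ^ m * (k:ℝ) ^ (n-m))
      < (k:ℝ)^n * Real.exp (-(Δ/(3*k))) := by
  have hk0 : (0:ℝ) < k := by exact_mod_cast hk
  have hlog : (2:ℝ)/3 < Real.log 2 := by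
    have := Real.log_two_gt_d9; linarith
  have h1 : Real.exp (-(2*Θ/k) * Real.log 2) * (((k:ℝ)+1) ^ m * (k:ℝ) ^ (n-m))
      ≤ (k:ℝ)^n * Real.exp ((m:ℝ)/k + -(2*Θ/k) * Real.log 2) := by
    rw [Real.exp_add]
    calc Real.exp (-(2*Θ/k) * Real.log 2) * (((k:ℝ)+1) ^ m * (k:ℝ) ^ (n-m))
        ≤ Real.exp (-(2*Θ/k) * Real.log 2) * ((k:ℝ)^n * Real.exp ((m:ℝ)/k)) :=
          mul_le_mul_of_nonneg_left (qp_weight_le hk hmn) (Real.exp_pos _).le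
      _ = (k:ℝ)^n * (Real.exp ((m:ℝ)/k) * Real.exp (-(2*Θ/k) * Real.log 2)) := by ring
  refine h1.trans_lt ?_
  have h2 : (m:ℝ)/k + -(2*Θ/k) * Real.log 2 < -(Δ/(3*k)) := by
    have hΘ0 : 0 < Θ := lt_of_lt_of_le hΔ hΘΔ
    have e1 : (m:ℝ)/k + -(2*Θ/k) * Real.log 2 ≤ Θ/k * (1 - 2 * Real.log 2) := by
      have : (m:ℝ)/k ≤ Θ/k := div_le_div_of_nonneg_right hmΘ hk0.le |>.trans_eq rfl
      · ring_nf; ring_nf at this; nlinarith [hlog, hΘ0, hk0]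
    have e2 : Θ/k * (1 - 2 * Real.log 2) ≤ Δ/k * (1 - 2 * Real.log 2) := by
      have hneg : (1 - 2 * Real.log 2) < 0 := by linarith
      have : Δ/k ≤ Θ/k := by apply div_le_div_of_nonneg_right hΘΔ hk0.le
      nlinarith
    have e3 : Δ/k * (1 - 2 * Real.log 2) < -(Δ/(3*k)) := by
      have hd : 0 < Δ/k := by positivity
      have : Δ/(3*k) = (Δ/k)/3 := by ring
      rw [this]
      nlinarith
    linarith
  have := Real.exp_lt_exp.mpr h2
  nlinarith [pow_pos hk0 n, Real.exp_pos ((m:ℝ)/k + -(2*Θ/k) * Real.log 2)]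

private lemma qp_filter_card_le_card {V : Type*} [Fintype V] [DecidableEq V]
    {r : ℕ} (hr : 1 ≤ r) {E : Finset (Finset V)} (hunif : ∀ e ∈ E, e.card = r)
    {S : Finset V} (hS : S.card = r - 1) :
    (E.filter (fun e => S ⊆ e)).card ≤ Fintype.card V := by
  have hsub : E.filter (fun e => S ⊆ e) ⊆ univ.image (fun v => insert v S) := by
    intro e he
    rw [mem_filter] at he
    obtain ⟨heE, hSe⟩ := he
    have hcard : e.card = r := hunif e heE
    have hne : (e \ S).Nonempty := by
      rw [← Finset.card_pos, Finset.card_sdiff, Finset.inter_eq_left.mpr hSe, hcard, hS]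
      omega
    obtain ⟨v, hv⟩ := hne
    rw [Finset.mem_sdiff] at hv
    have h1 : insert v S ⊆ e := Finset.insert_subset hv.1 hSe
    have h2 : e.card ≤ (insert v S).card := by
      rw [Finset.card_insert_of_notMem hv.2, hS, hcard]; omega
    have := Finset.eq_of_subset_of_card_le h1 h2
    rw [Finset.mem_image]
    exact ⟨v, Finset.mem_univ v, this⟩
  calc (E.filter (fun e => S ⊆ e)).card ≤ _ := Finset.card_le_card hsub
    _ ≤ (univ : Finset V).card := Finset.card_image_le
    _ = Fintype.card V := Finset.card_univ

private lemma qp_link_card_le {V : Type*} [Fintype V] [DecidableEq V]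
    {r : ℕ} (hr : 1 ≤ r) {E : Finset (Finset V)} (hunif : ∀ e ∈ E, e.card = r)
    {S : Finset V} (hS : S.card = r - 1) :
    (univ.filter (fun v => insert v S ∈ E)).card ≤ (E.filter (fun e => S ⊆ e)).card := by
  apply Finset.card_le_card_of_injOn (fun v => insert v S)
  · intro v hv
    rw [Finset.mem_coe, mem_filter] at hv ⊢
    exact ⟨hv.2, Finset.subset_insert v S⟩
  · intro v hv w hw hvw
    simp only [Finset.coe_filter, Set.mem_setOf_eq] at hv hw
    have hvS : v ∉ S := by
      intro hmem
      have h' : insert v S = S := Finset.insert_eq_self.mpr hmem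
      have := hunif _ hv.2
      rw [h', hS] at this
      omega
    have hvw' : insert v S = insert w S := hvw
    have : v ∈ insert w S := hvw' ▸ Finset.mem_insert_self v S
    rcases Finset.mem_insert.mp this with h | h
    · exact h
    · exact absurd h hvS

/-- Proposition 3.11 (quasirandom partition): if `X` is an `r`-uniform hypergraph with
maximum `(r−1)`-degree `Δ(X) ≥ 3k(log(2k) + (r−1) log v(X))`, then there is a partition
of `V(X)` into `k` parts `V_1,…,V_k` with `|V_i| ≤ 2 v(X)/k` and, for every `(r−1)`-set
`S` and each `i`, `|X(S) ∩ V_i| ≤ 2 Δ(X)/k`. -/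
theorem quasirandom_partition {V : Type*} [Fintype V] [DecidableEq V]
    (r k : ℕ) (hr : 1 ≤ r) (hk : 1 ≤ k)
    (E : Finset (Finset V)) (hunif : ∀ e ∈ E, e.card = r)
    (Δ : ℕ)
    (hΔ : Δ = Finset.sup ((Finset.univ : Finset V).powersetCard (r - 1))
        (fun S => (E.filter (fun e => S ⊆ e)).card))
    (hbig : (3 * k : ℝ) * (Real.log (2 * k) + (r - 1 : ℕ) * Real.log (Fintype.card V)) ≤ Δ) :
    ∃ P : V → Fin k,
      (∀ i : Fin k,
        ((Finset.univ.filter (fun v => P v = i)).card : ℝ) ≤ 2 * (Fintype.card V : ℝ) / k) ∧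
      ∀ S ∈ (Finset.univ : Finset V).powersetCard (r - 1), ∀ i : Fin k,
        ((Finset.univ.filter (fun v => P v = i ∧ insert v S ∈ E)).card : ℝ)
          ≤ 2 * (Δ : ℝ) / k := by
  classical
  have hk0 : (0:ℝ) < k := by exact_mod_cast hk
  by_cases hV : Fintype.card V = 0
  · haveI : IsEmpty V := Fintype.card_eq_zero_iff.mp hV
    refine ⟨fun _ => ⟨0, hk⟩, ?_, ?_⟩
    · intro i
      rw [Finset.univ_eq_empty, Finset.filter_empty, Finset.card_empty]
      push_cast
      positivity
    · intro S hS i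
      rw [Finset.univ_eq_empty, Finset.filter_empty, Finset.card_empty]
      push_cast
      positivity
  -- main case
  set n := Fintype.card V with hn
  have hn1 : 1 ≤ n := Nat.one_le_iff_ne_zero.mpr hV
  have hn0 : (0:ℝ) < n := by exact_mod_cast hn1
  have hlogn : 0 ≤ Real.log n := Real.log_nonneg (by exact_mod_cast hn1)
  have hlog2k : 0 < Real.log (2*k) := Real.log_pos (by
    have : (1:ℝ) ≤ k := by exact_mod_cast hk
    linarith)
  have hΔpos : (0:ℝ) < Δ := by
    refine lt_of_lt_of_le ?_ hbig
    have h1 : (0:ℝ) ≤ ((r-1 : ℕ):ℝ) * Real.log n := by positivity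
    nlinarith [hk0, hlog2k]
  have hΔn : Δ ≤ n := by
    rw [hΔ]
    apply Finset.sup_le
    intro S hS
    exact qp_filter_card_le_card hr hunif (Finset.mem_powersetCard.mp hS).2
  have hnpow : (0:ℝ) < (n:ℝ)^(r-1) := by positivity
  have hexpΔ : Real.exp (-((Δ:ℝ)/(3*k))) ≤ 1/(2*k*(n:ℝ)^(r-1)) := by
    have hX : (0:ℝ) < 2*k*(n:ℝ)^(r-1) := by positivity
    have hlogX : Real.log (2*k*(n:ℝ)^(r-1)) = Real.log (2*k) + (r-1:ℕ)*Real.log n := by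
      rw [Real.log_mul (by positivity) (by positivity), Real.log_pow]
    have h1 : Real.log (2*k*(n:ℝ)^(r-1)) ≤ (Δ:ℝ)/(3*k) := by
      rw [hlogX, le_div_iff₀ (by positivity : (0:ℝ) < 3*k)]
      calc (Real.log (2*k) + (r-1:ℕ)*Real.log n) * (3*k)
          = (3*k) * (Real.log (2*k) + (r-1:ℕ)*Real.log n) := by ring
        _ ≤ Δ := hbig
    calc Real.exp (-((Δ:ℝ)/(3*k))) ≤ Real.exp (-(Real.log (2*k*(n:ℝ)^(r-1)))) :=
          Real.exp_le_exp.mpr (by linarith)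
      _ = 1/(2*k*(n:ℝ)^(r-1)) := by
          rw [Real.exp_neg, Real.exp_log hX, one_div]
  -- set up the events
  set A : Option (Finset V) → Finset V :=
    fun o => o.elim univ (fun S => univ.filter fun v => insert v S ∈ E) with hA
  set tt : Option (Finset V) → ℝ :=
    fun o => o.elim (2*(n:ℝ)/k) (fun _ => 2*(Δ:ℝ)/k) with htt
  set bad : Option (Finset V) × Fin k → Finset (V → Fin k) :=
    fun e => univ.filter fun P =>
      tt e.1 < ((univ.filter fun v => P v = e.2 ∧ v ∈ A e.1).card : ℝ) with hbad
  set I : Finset (Option (Finset V) × Fin k) :=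
    (insert none (((univ : Finset V).powersetCard (r-1)).image some)) ×ˢ univ with hI
  by_contra hno
  have cover : ∀ P : V → Fin k, ∃ e ∈ I, P ∈ bad e := by
    intro P
    by_contra hP
    push_neg at hP
    apply hno
    refine ⟨P, ?_, ?_⟩
    · intro i
      have hmem : ((none : Option (Finset V)), i) ∈ I := by
        simp [hI]
      have h := hP (none, i) hmem
      simp only [hbad, Finset.mem_filter, Finset.mem_univ, true_and, not_lt] at h
      refine le_trans ?_ h
      have : (univ.filter (fun v => P v = i)) =
          (univ.filter fun v => P v = i ∧ v ∈ A none) := by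
        apply Finset.filter_congr
        intro v _
        simp [hA]
      rw [this]
    · intro S hS i
      have hmem : ((some S : Option (Finset V)), i) ∈ I := by
        simp only [hI, Finset.mem_product, Finset.mem_univ, and_true]
        exact Finset.mem_insert_of_mem (Finset.mem_image_of_mem some hS)
      have h := hP (some S, i) hmem
      simp only [hbad, Finset.mem_filter, Finset.mem_univ, true_and, not_lt] at h
      refine le_trans ?_ h
      have : (univ.filter (fun v => P v = i ∧ insert v S ∈ E)) =
          (univ.filter fun v => P v = i ∧ v ∈ A (some S)) := by
        apply Finset.filter_congr
        intro v _
        simp [hA]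
      rw [this]
  have hcardfun : Fintype.card (V → Fin k) = k ^ n := by
    rw [Fintype.card_fun, Fintype.card_fin]
  have hunion : ((k:ℝ))^n ≤ ∑ e ∈ I, ((bad e).card : ℝ) := by
    have h1 : (univ : Finset (V → Fin k)) ⊆ I.biUnion bad :=
      fun P _ => Finset.mem_biUnion.mpr (cover P)
    have h2 : (k:ℕ) ^ n ≤ ∑ e ∈ I, (bad e).card := by
      calc (k:ℕ)^n = (univ : Finset (V → Fin k)).card := by
            rw [Finset.card_univ, hcardfun]
        _ ≤ (I.biUnion bad).card := Finset.card_le_card h1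
        _ ≤ ∑ e ∈ I, (bad e).card := Finset.card_biUnion_le
    calc ((k:ℝ))^n = (((k:ℕ)^n : ℕ) : ℝ) := by push_cast; ring
      _ ≤ ((∑ e ∈ I, (bad e).card : ℕ) : ℝ) := by exact_mod_cast h2
      _ = ∑ e ∈ I, ((bad e).card : ℝ) := by push_cast; ring
  have hev : ∀ e ∈ I, ((bad e).card : ℝ) < (k:ℝ)^n * Real.exp (-((Δ:ℝ)/(3*k))) := by
    rintro ⟨o, i⟩ he
    have hb := qp_count_bad_le (k := k) (A o) i (tt o)
    refine lt_of_le_of_lt hb ?_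
    cases o with
    | none =>
      have hAcard : (A none).card = n := by simp [hA]; rfl
      rw [hAcard]
      have ht : tt none = 2*(n:ℝ)/k := rfl
      rw [ht]
      exact qp_event_bound (k := k) (n := n) (m := n) (Θ := (n:ℝ)) (Δ := (Δ:ℝ))
        hk le_rfl le_rfl (by exact_mod_cast hΔn) hΔpos
    | some S =>
      have hSin : S ∈ (univ : Finset V).powersetCard (r-1) := by
        simp only [hI, Finset.mem_product] at he
        rcases Finset.mem_insert.mp he.1 with h | h
        · exact absurd h (by simp)
        · obtain ⟨S', hS', hSS⟩ := Finset.mem_image.mp h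
          obtain rfl : S' = S := Option.some_injective _ hSS
          exact hS'
      have hScard : S.card = r - 1 := (Finset.mem_powersetCard.mp hSin).2
      have hmΔ : (A (some S)).card ≤ Δ := by
        calc (A (some S)).card ≤ (E.filter (fun e => S ⊆ e)).card :=
              qp_link_card_le hr hunif hScard
          _ ≤ Δ := by
              rw [hΔ]
              exact Finset.le_sup (f := fun S => (E.filter (fun e => S ⊆ e)).card) hSin
      have hmn : (A (some S)).card ≤ n := Finset.card_le_univ _
      have ht : tt (some S) = 2*(Δ:ℝ)/k := rfl
      rw [ht]
      exact qp_event_bound (k := k) (n := n) (m := (A (some S)).card)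
        (Θ := (Δ:ℝ)) (Δ := (Δ:ℝ)) hk hmn (by exact_mod_cast hmΔ) le_rfl hΔpos
  have hne : I.Nonempty := ⟨(none, ⟨0, hk⟩), by simp [hI]⟩
  have hsum : ∑ e ∈ I, ((bad e).card : ℝ)
      < ∑ e ∈ I, (k:ℝ)^n * Real.exp (-((Δ:ℝ)/(3*k))) :=
    Finset.sum_lt_sum_of_nonempty hne hev
  have hIcard : I.card = (n.choose (r-1) + 1) * k := by
    rw [hI, Finset.card_product, Finset.card_univ, Fintype.card_fin,
      Finset.card_insert_of_notMem (by simp),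
      Finset.card_image_of_injective _ (Option.some_injective _),
      Finset.card_powersetCard, Finset.card_univ]
  have hfinal : ∑ e ∈ I, (k:ℝ)^n * Real.exp (-((Δ:ℝ)/(3*k))) ≤ (k:ℝ)^n := by
    rw [Finset.sum_const, nsmul_eq_mul, hIcard]
    have hC : ((n.choose (r-1) + 1 : ℕ) : ℝ) ≤ 2 * (n:ℝ)^(r-1) := by
      have h1 : n.choose (r-1) ≤ n^(r-1) := Nat.choose_le_pow n (r-1)
      have h2 : 1 ≤ n^(r-1) := Nat.one_le_pow _ _ hn1
      have : (n.choose (r-1) + 1 : ℕ) ≤ 2 * n^(r-1) := by omega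
      calc ((n.choose (r-1) + 1 : ℕ) : ℝ) ≤ ((2 * n^(r-1) : ℕ) : ℝ) := by exact_mod_cast this
        _ = 2 * (n:ℝ)^(r-1) := by push_cast; ring
    have hE0 : 0 < Real.exp (-((Δ:ℝ)/(3*k))) := Real.exp_pos _
    calc (((n.choose (r-1) + 1) * k : ℕ) : ℝ) * ((k:ℝ)^n * Real.exp (-((Δ:ℝ)/(3*k))))
        = ((n.choose (r-1) + 1 : ℕ) : ℝ) * k * ((k:ℝ)^n * Real.exp (-((Δ:ℝ)/(3*k)))) := by
          push_cast; ring
      _ ≤ (2 * (n:ℝ)^(r-1)) * k * ((k:ℝ)^n * (1/(2*k*(n:ℝ)^(r-1)))) := by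
          apply mul_le_mul
          · exact mul_le_mul_of_nonneg_right hC hk0.le
          · exact mul_le_mul_of_nonneg_left hexpΔ (by positivity)
          · positivity
          · positivity
      _ = (k:ℝ)^n := by
          field_simp
  have : ((k:ℝ))^n < (k:ℝ)^n := lt_of_le_of_lt hunion (lt_of_lt_of_le hsum hfinal)
  exact lt_irrefl _ this
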